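/- On ℝ² with coordinates (x,y), the Lorentzian metric g₀ = (1/(1 + x²y²)) dx·dy is invariant under the group generated by all maps f_λ(x,y) = (λx, y/λ) for λ > 0. Moreover under the conformal chart ψ(x,y) = (arctan x, arctan y), one has (ψ⁻¹)*(dx·dy) = dθ·dφ / (cos²θ cos²φ) and (ψ⁻¹)*g₀ = dθ·dφ / (cos²θ cos²φ + sin²θ sin²φ). -/

import Mathlib

open Real

/-- The metric `g₀ = (1/(1+x²y²)) dx·dy` on `ℝ²` is invariant under all
`f_λ(x,y) = (λx, y/λ)`, `λ > 0`; and in the chart `ψ(x,y) = (arctan x, arctan y)`,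
`(ψ⁻¹)*(dx·dy) = dθ·dφ/(cos²θ cos²φ)` and
`(ψ⁻¹)*g₀ = dθ·dφ/(cos²θ cos²φ + sin²θ sin²φ)`. -/
theorem stmt_5
    (g₀ : ℝ × ℝ → ℝ × ℝ → ℝ × ℝ → ℝ)
    (hg₀ : ∀ p v w : ℝ × ℝ,
      g₀ p v w = (1 / (1 + p.1 ^ 2 * p.2 ^ 2)) * (v.1 * w.2 + w.1 * v.2) / 2) :
    (∀ l : ℝ, 0 < l → ∀ p v w : ℝ × ℝ,
      g₀ (l * p.1, p.2 / l) (l * v.1, v.2 / l) (l * w.1, w.2 / l) = g₀ p v w) ∧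
    (∀ θ φ : ℝ, |θ| < π / 2 → |φ| < π / 2 → ∀ v w : ℝ × ℝ,
      ((v.1 / cos θ ^ 2) * (w.2 / cos φ ^ 2) + (w.1 / cos θ ^ 2) * (v.2 / cos φ ^ 2)) / 2
        = ((v.1 * w.2 + w.1 * v.2) / 2) / (cos θ ^ 2 * cos φ ^ 2)) ∧
    (∀ θ φ : ℝ, |θ| < π / 2 → |φ| < π / 2 → ∀ v w : ℝ × ℝ,
      g₀ (tan θ, tan φ) (v.1 / cos θ ^ 2, v.2 / cos φ ^ 2)
          (w.1 / cos θ ^ 2, w.2 / cos φ ^ 2)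
        = ((v.1 * w.2 + w.1 * v.2) / 2)
            / (cos θ ^ 2 * cos φ ^ 2 + sin θ ^ 2 * sin φ ^ 2)) := by
  refine ⟨?_, ?_, ?_⟩
  · intro l hl p v w
    rw [hg₀, hg₀]
    have hl' : l ≠ 0 := ne_of_gt hl
    have h1 : 1 + (l * p.1) ^ 2 * (p.2 / l) ^ 2 = 1 + p.1 ^ 2 * p.2 ^ 2 := by
      field_simp
    rw [h1]
    have h2 : 1 + p.1 ^ 2 * p.2 ^ 2 ≠ 0 := by positivity
    field_simp
  · intro θ φ hθ hφ v w
    have hc : cos θ ≠ 0 := ne_of_gt (cos_pos_of_mem_Ioo (abs_lt.mp hθ))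
    have hd : cos φ ≠ 0 := ne_of_gt (cos_pos_of_mem_Ioo (abs_lt.mp hφ))
    field_simp
  · intro θ φ hθ hφ v w
    have hc : (0:ℝ) < cos θ := cos_pos_of_mem_Ioo (abs_lt.mp hθ)
    have hd : (0:ℝ) < cos φ := cos_pos_of_mem_Ioo (abs_lt.mp hφ)
    rw [hg₀]
    simp only [tan_eq_sin_div_cos]
    have hden : cos θ ^ 2 * cos φ ^ 2 + sin θ ^ 2 * sin φ ^ 2 > 0 := by positivity
    have h1 : 1 + (sin θ / cos θ) ^ 2 * (sin φ / cos φ) ^ 2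
        = (cos θ ^ 2 * cos φ ^ 2 + sin θ ^ 2 * sin φ ^ 2) / (cos θ ^ 2 * cos φ ^ 2) := by
      field_simp
    rw [h1]
    field_simp
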